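/- Let γ : ℝ → ℝ² be the tricuspoid parametrization γ(φ) = (2cos φ + cos 2φ, 2sin φ − sin 2φ). Let n ≥ 3 be an integer and suppose φ ∈ [0, 2π/3] satisfies ∫₀^φ ‖γ'(ψ)‖ dψ = 16/n (so γ(φ) is the first n-division point of the tricuspoid). Then the x-coordinate x = 2cos φ + cos 2φ is a root of the cubic polynomial f_n(X) = 4n⁴·X³ − (27n⁴ − 288n³ + 864n²)·X − (27n⁴ − 432n³ + 2448n² − 6912n + 10368). -/

import Mathlib

open Real Polynomial

set_option maxHeartbeats 1000000 in
/-- The `x`-coordinate of the first `n`-division point of the tricuspoid is a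
root of the cubic `f_n(X) = 4n⁴X³ − (27n⁴ − 288n³ + 864n²)X −
(27n⁴ − 432n³ + 2448n² − 6912n + 10368)`. -/
theorem tricuspoid_division_point_x_is_root
    (γ : ℝ → EuclideanSpace ℝ (Fin 2))
    (hγ : ∀ φ : ℝ, γ φ =
      ![2 * Real.cos φ + Real.cos (2 * φ),
        2 * Real.sin φ - Real.sin (2 * φ)])
    (n : ℕ) (hn : 3 ≤ n)
    (φ : ℝ) (hφ0 : 0 ≤ φ) (hφ1 : φ ≤ 2 * π / 3)
    (hs : (∫ ψ in (0 : ℝ)..φ, ‖deriv γ ψ‖) = 16 / (n : ℝ))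
    (x : ℝ) (hx : x = 2 * Real.cos φ + Real.cos (2 * φ))
    (f : Polynomial ℚ)
    (hf : f = C (4 * (n : ℚ) ^ 4) * X ^ 3
      - C (27 * (n : ℚ) ^ 4 - 288 * (n : ℚ) ^ 3 + 864 * (n : ℚ) ^ 2) * X
      - C (27 * (n : ℚ) ^ 4 - 432 * (n : ℚ) ^ 3 + 2448 * (n : ℚ) ^ 2
            - 6912 * (n : ℚ) + 10368)) :
    Polynomial.aeval x f = 0 := by
  have hn0 : (n:ℝ) ≠ 0 := by positivity
  -- the derivative of γ
  have hderiv : ∀ ψ : ℝ, HasDerivAt γ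
      (!₂[-2 * Real.sin ψ - 2 * Real.sin (2*ψ),
         2 * Real.cos ψ - 2 * Real.cos (2*ψ)] : EuclideanSpace ℝ (Fin 2)) ψ := by
    intro ψ
    have h1 : HasDerivAt (fun t : ℝ => 2 * Real.cos t + Real.cos (2 * t))
        (-2 * Real.sin ψ - 2 * Real.sin (2*ψ)) ψ := by
      have := ((Real.hasDerivAt_cos ψ).const_mul 2).add
        (((hasDerivAt_id ψ).const_mul 2).cos)
      exact this.congr_deriv (by simp only [id_eq]; ring)
    have h2 : HasDerivAt (fun t : ℝ => 2 * Real.sin t - Real.sin (2 * t))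
        (2 * Real.cos ψ - 2 * Real.cos (2*ψ)) ψ := by
      have := ((Real.hasDerivAt_sin ψ).const_mul 2).sub
        (((hasDerivAt_id ψ).const_mul 2).sin)
      exact this.congr_deriv (by simp only [id_eq]; ring)
    have hpi : HasDerivAt (fun t : ℝ => (![2 * Real.cos t + Real.cos (2 * t),
          2 * Real.sin t - Real.sin (2 * t)] : Fin 2 → ℝ))
        ![-2 * Real.sin ψ - 2 * Real.sin (2*ψ), 2 * Real.cos ψ - 2 * Real.cos (2*ψ)] ψ := by
      rw [hasDerivAt_pi]
      intro i
      fin_cases i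
      · simpa using h1
      · simpa using h2
    have h := ((EuclideanSpace.equiv (Fin 2) ℝ).symm.toContinuousLinearMap.hasFDerivAt).comp_hasDerivAt ψ hpi
    have hγe : γ = ⇑((EuclideanSpace.equiv (Fin 2) ℝ).symm.toContinuousLinearMap) ∘
        (fun t : ℝ => (![2 * Real.cos t + Real.cos (2 * t),
          2 * Real.sin t - Real.sin (2 * t)] : Fin 2 → ℝ)) := by
      funext t
      apply WithLp.ofLp_injective
      rw [hγ t]
      rfl
    rw [hγe]
    exact h
  -- the speed
  have hnorm : ∀ ψ ∈ Set.uIcc (0:ℝ) φ, ‖deriv γ ψ‖ = 4 * Real.sin (3 * ψ / 2) := by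
    intro ψ hψ
    rw [Set.uIcc_of_le hφ0] at hψ
    obtain ⟨h0, h1⟩ := hψ
    have h1' : ψ ≤ 2 * π / 3 := le_trans h1 hφ1
    rw [(hderiv ψ).deriv]
    have hB : 0 ≤ 4 * Real.sin (3 * ψ / 2) := by
      have := Real.sin_nonneg_of_nonneg_of_le_pi (x := 3 * ψ / 2) (by linarith) (by linarith)
      linarith
    rw [EuclideanSpace.norm_eq]
    rw [show ((4:ℝ) * Real.sin (3 * ψ / 2)) = Real.sqrt ((4 * Real.sin (3*ψ/2))^2) from
      (Real.sqrt_sq hB).symm]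
    congr 1
    have hadd : Real.cos (3*ψ) = Real.cos ψ * Real.cos (2*ψ) - Real.sin ψ * Real.sin (2*ψ) := by
      rw [← Real.cos_add]; ring_nf
    have h2 : Real.cos (3*ψ) = 1 - 2 * Real.sin (3*ψ/2)^2 := by
      have := Real.cos_two_mul (3*ψ/2)
      rw [show (2:ℝ) * (3*ψ/2) = 3*ψ by ring] at this
      nlinarith [Real.sin_sq_add_cos_sq (3*ψ/2)]
    simp [Fin.sum_univ_two]
    nlinarith [Real.sin_sq_add_cos_sq ψ, Real.sin_sq_add_cos_sq (2*ψ), hadd, h2]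
  -- compute the arclength integral
  have hint : (∫ ψ in (0:ℝ)..φ, ‖deriv γ ψ‖) = 8/3 - 8/3 * Real.cos (3 * φ / 2) := by
    rw [intervalIntegral.integral_congr (g := fun ψ => 4 * Real.sin (3 * ψ / 2)) hnorm]
    have key : ∀ ψ : ℝ, HasDerivAt (fun t => -(8/3) * Real.cos (3 * t / 2))
        (4 * Real.sin (3 * ψ / 2)) ψ := by
      intro ψ
      have h := (((hasDerivAt_id ψ).const_mul 3).div_const 2).cos.const_mul (-(8/3) : ℝ)
      exact h.congr_deriv (by simp only [id_eq]; ring)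
    rw [intervalIntegral.integral_eq_sub_of_hasDerivAt (fun ψ _ => key ψ)
      (by apply Continuous.intervalIntegrable; fun_prop)]
    simp
    ring
  have hc : Real.cos (3 * φ / 2) = 1 - 6 / (n:ℝ) := by
    rw [hint] at hs
    field_simp at hs ⊢
    linarith
  -- algebra
  set u := Real.cos (φ/2) with hu
  have h3 : Real.cos (3 * φ / 2) = 4 * u^3 - 3 * u := by
    have := Real.cos_three_mul (φ/2)
    rw [show (3:ℝ) * (φ/2) = 3 * φ / 2 by ring] at this
    exact this
  have hcosφ : Real.cos φ = 2 * u^2 - 1 := by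
    have := Real.cos_two_mul (φ/2)
    rw [show (2:ℝ) * (φ/2) = φ by ring] at this
    exact this
  have hcos2φ : Real.cos (2*φ) = 2 * (2*u^2-1)^2 - 1 := by
    rw [Real.cos_two_mul, hcosφ]
  have hcu : 4 * u^3 - 3 * u = 1 - 6 / (n:ℝ) := by rw [← h3, hc]
  have hden : (1:ℝ) - (4 * u^3 - 3 * u) ≠ 0 := by
    rw [hcu]
    have : (0:ℝ) < 6 / (n:ℝ) := by positivity
    intro h
    nlinarith
  have hnn : (n:ℝ) = 6 / (1 - (4 * u^3 - 3 * u)) := by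
    rw [eq_div_iff hden]
    have : (n:ℝ) * (6 / n) = 6 := by field_simp
    linear_combination (-(n:ℝ)) * hcu + this
  subst hf hx
  simp only [map_sub, map_mul, map_pow, aeval_X, aeval_C]
  push_cast
  simp only [map_ofNat, Rat.cast_ofNat]
  rw [hcos2φ, hcosφ, hnn]
  field_simp [show (1:ℝ) - u * (4 * u ^ 2 - 3) ≠ 0 by convert hden using 1; ring]
  ring
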